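/- The total number of valleys (a down-step immediately followed by an up-step) across all Dyck paths of semilength n equals binomial(2n-1, n+1). -/

import Mathlib

/-- Number of valleys (a down-step `false` immediately followed by an up-step `true`)
in a UD word. -/
def dyckValleys (w : List Bool) : ℕ := (w.zip w.tail).count (false, true)

/-- A word over `{U, D}` (with `true` = up-step, `false` = down-step) is a Dyck word
if it has equally many up- and down-steps and every prefix has at least as many
up-steps as down-steps. -/
def IsDyckWord (w : List Bool) : Prop :=
  w.count false = w.count true ∧
    ∀ m : ℕ, (w.take m).count false ≤ (w.take m).count true

/-! ### Arithmetic lemma -/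

lemma dyck_arith (m : ℕ) : (2*m+1) * catalan m = (2*m+1).choose (m+2) + catalan (m+1) := by
  have h4 := succ_mul_catalan_eq_centralBinom m
  have h5 := succ_mul_catalan_eq_centralBinom (m+1)
  have hc4 : Nat.centralBinom m = (2*m).choose m := rfl
  have hc5 : Nat.centralBinom (m+1) = (2*m+2).choose (m+1) := by
    rw [Nat.centralBinom, show 2*(m+1) = 2*m+2 from by ring]
  rw [hc4] at h4; rw [hc5] at h5
  have h1 := Nat.choose_succ_right_eq (2*m) m
  have h2 := Nat.choose_succ_right_eq (2*m+1) (m+1)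
  rw [show 2*m - m = m from by omega] at h1
  rw [show 2*m+1 - (m+1) = m from by omega] at h2
  have hp : (2*m+1).choose (m+1) = (2*m).choose m + (2*m).choose (m+1) := by
    rw [show 2*m+1 = (2*m)+1 from rfl]; exact Nat.choose_succ_succ _ _
  have hp2 : (2*m+2).choose (m+1) = (2*m+1).choose m + (2*m+1).choose (m+1) := by
    rw [show 2*m+2 = (2*m+1)+1 from rfl]; exact Nat.choose_succ_succ _ _
  have hs : (2*m+1).choose m = (2*m+1).choose (m+1) := by
    have := Nat.choose_symm (show m+1 ≤ 2*m+1 by omega)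
    rw [show 2*m+1-(m+1) = m from by omega] at this
    exact this
  apply Nat.eq_of_mul_eq_mul_left (show 0 < (m+1)*(m+2) by positivity)
  zify at h1 h2 h4 h5 hp hp2 hs ⊢
  linear_combination ((m:ℤ)+2)*(2*m+1)*h4 - ((m:ℤ)+1)*h2 - ((m:ℤ)+1)*h5 - ((m:ℤ)+1)*hp2 -
    ((m:ℤ)+1)*hs - ((m:ℤ)+1)*((m:ℤ)+2)*hp - ((m:ℤ)+2)*h1

/-! ### Boundary lemma: #UD = #DU + 1 on nonempty Dyck words -/

lemma ud_du : ∀ l : List Bool,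
    (l.zip l.tail).count (true,false) + (if l.getLast? = some true then 1 else 0)
      = (l.zip l.tail).count (false,true) + (if l.head? = some true then 1 else 0)
  | [] => by simp
  | [x] => by cases x <;> simp
  | x :: y :: t => by
    have ih := ud_du (y :: t)
    simp only [List.tail_cons, List.zip_cons_cons, List.count_cons, List.getLast?_cons_cons,
      List.head?_cons] at *
    cases x <;> cases y <;> simp_all <;> omega

lemma dyck_head_true {l : List Bool} (h : IsDyckWord l) (hne : l ≠ []) : l.head? = some true := by
  obtain ⟨b, t, rfl⟩ : ∃ b t, l = b :: t := ⟨l.head hne, l.tail, (List.cons_head_tail hne).symm⟩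
  have h2 := h.2 1
  cases b
  · simp at h2
  · simp

lemma dyck_getLast_false {l : List Bool} (h : IsDyckWord l) (hne : l ≠ []) :
    l.getLast? = some false := by
  rw [List.getLast?_eq_getLast hne]
  by_contra hf
  have hl : l.getLast hne = true := by
    cases hlast : l.getLast hne
    · exact absurd (by rw [hlast]) hf
    · rfl
  have hdec := List.dropLast_append_getLast hne
  have h2 := h.2 (l.length - 1)
  rw [← List.dropLast_eq_take] at h2
  have h1 := h.1
  rw [← hdec, hl] at h1
  simp [List.count_append] at h1
  omega

lemma ud_eq_du_succ {l : List Bool} (h : IsDyckWord l) (hne : l ≠ []) :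
    (l.zip l.tail).count (true,false) = dyckValleys l + 1 := by
  have := ud_du l
  rw [dyck_head_true h hne, dyck_getLast_false h hne] at this
  simpa [dyckValleys] using this

/-! ### Inserting/removing a peak preserves Dyck words -/

lemma dyck_insert {a b : List Bool} (h : IsDyckWord (a ++ b)) :
    IsDyckWord (a ++ true :: false :: b) := by
  obtain ⟨h1, h2⟩ := h
  constructor
  · simp only [List.count_append, List.count_cons] at h1 ⊢
    simp at h1 ⊢
    omega
  · intro m
    rcases lt_or_ge m (a.length + 1) with hm | hm
    · have hm' : m ≤ a.length := by omega
      rw [List.take_append_of_le_length hm']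
      have := h2 m
      rwa [List.take_append_of_le_length hm'] at this
    rcases eq_or_lt_of_le hm with hm1 | hm2
    · have e1 : (a ++ true :: false :: b).take m = a ++ [true] := by
        rw [List.take_append, List.take_of_length_le (by omega),
          show m - a.length = 1 by omega]
        rfl
      have h2a := h2 a.length
      rw [List.take_append, List.take_length, Nat.sub_self] at h2a
      simp only [List.take_zero, List.append_nil] at h2a
      rw [e1]
      simp [List.count_append, List.count_cons]
      omega
    · obtain ⟨k, hk⟩ : ∃ k, m - a.length = k + 2 := ⟨m - a.length - 2, by omega⟩
      have e1 : (a ++ true :: false :: b).take m = a ++ true :: false :: b.take k := by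
        rw [List.take_append, List.take_of_length_le (by omega), hk]
        rfl
      have e2 := h2 (a.length + k)
      rw [List.take_append, List.take_of_length_le (by omega),
        show a.length + k - a.length = k by omega] at e2
      rw [e1]
      simp [List.count_append, List.count_cons] at e2 ⊢
      omega

lemma dyck_erase {a b : List Bool} (h : IsDyckWord (a ++ true :: false :: b)) :
    IsDyckWord (a ++ b) := by
  obtain ⟨h1, h2⟩ := h
  constructor
  · simp only [List.count_append, List.count_cons] at h1 ⊢
    simp at h1 ⊢
    omega
  · intro m
    rcases lt_or_ge m (a.length + 1) with hm | hm
    · have hm' : m ≤ a.length := by omega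
      rw [List.take_append_of_le_length hm']
      have := h2 m
      rwa [List.take_append_of_le_length hm'] at this
    · have e1 : (a ++ b).take m = a ++ b.take (m - a.length) := by
        rw [List.take_append, List.take_of_length_le (by omega)]
      have e2 := h2 (m + 2)
      rw [List.take_append, List.take_of_length_le (by omega),
        show m + 2 - a.length = (m - a.length) + 2 by omega] at e2
      rw [e1]
      simp [List.take_succ_cons, List.count_append, List.count_cons] at e2 ⊢
      omega

/-! ### Counting factor occurrences by index -/

lemma count_zip_countP (a b : Bool) : ∀ l : List Bool,
    (l.zip l.tail).count (a, b) =
      (List.range (l.length - 1)).countP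
        (fun i => l.getD i (!a) == a && l.getD (i+1) (!b) == b)
  | [] => by simp
  | [x] => by simp
  | x :: y :: t => by
    have ih := count_zip_countP a b (y :: t)
    simp only [List.tail_cons, List.zip_cons_cons, List.count_cons, List.length_cons] at ih ⊢
    rw [show x :: y :: t = [x] ++ y :: t from rfl]
    rw [Nat.add_sub_cancel] at ih
    rw [show t.length + 1 + 1 - 1 = t.length + 1 by omega]
    rw [List.range_succ_eq_map, List.countP_cons, List.countP_map]
    have hfun : ∀ i : ℕ, (([x] ++ y :: t).getD (Nat.succ i) (!a) == a &&
        ([x] ++ y :: t).getD (Nat.succ i + 1) (!b) == b) =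
        ((y :: t).getD i (!a) == a && (y :: t).getD (i + 1) (!b) == b) := by
      intro i; rfl
    rw [List.countP_congr (fun i _ => by rw [Function.comp_apply, hfun])]
    rw [ih]
    have h0 : (([x] ++ y :: t).getD 0 (!a) == a && ([x] ++ y :: t).getD (0+1) (!b) == b)
        = ((x == a) && (y == b)) := rfl
    rw [h0]
    by_cases hx : x = a <;> by_cases hy : y = b <;> simp [hx, hy, Prod.ext_iff]

lemma countP_range_eq_sum (n : ℕ) (p : ℕ → Bool) :
    (List.range n).countP p = ∑ i ∈ Finset.range n, if p i then 1 else 0 := by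
  induction n with
  | zero => simp
  | succ n ih =>
    rw [List.range_succ, List.countP_append, Finset.sum_range_succ, ih]
    simp [List.countP_cons]

lemma peaks_eq_sum (l : List Bool) :
    (l.zip l.tail).count (true, false) = ∑ i ∈ Finset.range (l.length - 1),
      if l.getD i false = true ∧ l.getD (i+1) true = false then 1 else 0 := by
  classical
  rw [count_zip_countP, countP_range_eq_sum]
  apply Finset.sum_congr rfl
  intro i _
  by_cases h1 : l.getD i false = true <;> by_cases h2 : l.getD (i+1) true = false <;>
    simp [h1, h2]

/-! ### The set of Dyck words of semilength `n` as a Finset of lists -/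

open scoped Classical in
noncomputable def dyckSet (n : ℕ) : Finset (List Bool) :=
  (Finset.univ.filter (fun w : Fin (2 * n) → Bool => IsDyckWord (List.ofFn w))).image List.ofFn

lemma mem_dyckSet {n : ℕ} {l : List Bool} :
    l ∈ dyckSet n ↔ l.length = 2 * n ∧ IsDyckWord l := by
  classical
  constructor
  · intro h
    simp only [dyckSet, Finset.mem_image, Finset.mem_filter, Finset.mem_univ, true_and] at h
    obtain ⟨w, hw, rfl⟩ := h
    exact ⟨by simp, hw⟩
  · rintro ⟨hlen, hd⟩
    have hofn : List.ofFn (fun i : Fin (2 * n) => l.getD i false) = l := by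
      apply List.ext_getElem
      · simp [hlen]
      · intro i h1 h2
        simp only [List.getElem_ofFn]
        exact List.getD_eq_getElem l false h2
    simp only [dyckSet, Finset.mem_image, Finset.mem_filter, Finset.mem_univ, true_and]
    exact ⟨fun i : Fin (2 * n) => l.getD i false, by rw [hofn]; exact hd, hofn⟩

def bs : Bool → DyckStep := fun b => if b then DyckStep.U else DyckStep.D

lemma bs_inj : Function.Injective bs := by decide

def sb : DyckStep → Bool := fun s => s == DyckStep.U

lemma sb_bs : ∀ b, sb (bs b) = b := by decide
lemma bs_sb : ∀ s, bs (sb s) = s := by intro s; cases s <;> rfl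

lemma card_dyckSet (n : ℕ) : (dyckSet n).card = catalan n := by
  classical
  rw [← DyckWord.card_dyckWord_semilength_eq_catalan, ← Fintype.card_coe]
  apply Fintype.card_congr
  refine Equiv.ofBijective (fun l => ⟨⟨l.val.map bs, ?_, ?_⟩, ?_⟩) ⟨?_, ?_⟩
  · have h := (mem_dyckSet.mp l.2).2.1
    rw [show DyckStep.U = bs true from rfl, show DyckStep.D = bs false from rfl,
      List.count_map_of_injective _ _ bs_inj, List.count_map_of_injective _ _ bs_inj]
    exact h.symm
  · intro i
    have h := (mem_dyckSet.mp l.2).2.2 i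
    rw [← List.map_take, show DyckStep.U = bs true from rfl, show DyckStep.D = bs false from rfl,
      List.count_map_of_injective _ _ bs_inj, List.count_map_of_injective _ _ bs_inj]
    exact h
  · have hlen : (l.val.map bs).length = 2 * n := by
      rw [List.length_map]; exact (mem_dyckSet.mp l.2).1
    have := @DyckWord.two_mul_semilength_eq_length ⟨l.val.map bs, by
      rw [show DyckStep.U = bs true from rfl, show DyckStep.D = bs false from rfl,
        List.count_map_of_injective _ _ bs_inj, List.count_map_of_injective _ _ bs_inj]
      exact (mem_dyckSet.mp l.2).2.1.symm, by
      intro i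
      have h := (mem_dyckSet.mp l.2).2.2 i
      rw [← List.map_take, show DyckStep.U = bs true from rfl, show DyckStep.D = bs false from rfl,
        List.count_map_of_injective _ _ bs_inj, List.count_map_of_injective _ _ bs_inj]
      exact h⟩
    simp only at this
    omega
  · intro l1 l2 he
    have : l1.val.map bs = l2.val.map bs := congrArg (fun p => p.val.toList) he
    exact Subtype.ext (List.map_injective_iff.mpr bs_inj this)
  · rintro ⟨p, hp⟩
    have hsb_inj : Function.Injective sb := fun a b h => by
      have := congrArg bs h; rwa [bs_sb, bs_sb] at this
    have hmem : p.toList.map sb ∈ dyckSet n := by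
      rw [mem_dyckSet]
      refine ⟨by rw [List.length_map, ← DyckWord.two_mul_semilength_eq_length, hp], ?_, ?_⟩
      · rw [show false = sb DyckStep.D from rfl, show true = sb DyckStep.U from rfl,
          List.count_map_of_injective _ _ hsb_inj, List.count_map_of_injective _ _ hsb_inj]
        exact p.count_U_eq_count_D.symm
      · intro m
        rw [← List.map_take, show false = sb DyckStep.D from rfl,
          show true = sb DyckStep.U from rfl,
          List.count_map_of_injective _ _ hsb_inj, List.count_map_of_injective _ _ hsb_inj]
        exact p.count_D_le_count_U m
    refine ⟨⟨p.toList.map sb, hmem⟩, ?_⟩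
    apply Subtype.ext
    apply DyckWord.ext
    simp only [List.map_map]
    rw [show bs ∘ sb = id from funext bs_sb]
    simp

/-! ### The peak bijection -/

lemma take_len_append {α : Type*} {a : List α} (x : List α) {i : ℕ} (h : a.length = i) :
    (a ++ x).take i = a := by subst h; exact List.take_left

lemma drop_len_append {α : Type*} {a : List α} (x : List α) {i : ℕ} (h : a.length = i) :
    (a ++ x).drop i = x := by subst h; exact List.drop_left

open scoped Classical in
lemma card_filter_peak (n i : ℕ) (hn : 1 ≤ n) (hi : i < 2 * n - 1) :
    ((dyckSet n).filter
      (fun l => l.getD i false = true ∧ l.getD (i+1) true = false)).card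
      = (dyckSet (n-1)).card := by
  refine Finset.card_nbij' (fun l => l.take i ++ l.drop (i+2))
    (fun v => v.take i ++ true :: false :: v.drop i) ?_ ?_ ?_ ?_
  · -- forward map lands in dyckSet (n-1)
    intro l hl
    obtain ⟨hmem, hpk⟩ := Finset.mem_filter.mp hl
    obtain ⟨hlen, hd⟩ := mem_dyckSet.mp hmem
    have hi1 : i < l.length := by omega
    have hi2 : i + 1 < l.length := by omega
    have hg1 : l[i] = true := by rw [← List.getD_eq_getElem l false hi1]; exact hpk.1
    have hg2 : l[i+1] = false := by rw [← List.getD_eq_getElem l true hi2]; exact hpk.2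
    have hdec : l = l.take i ++ true :: false :: l.drop (i+2) := by
      conv_lhs => rw [← List.take_append_drop i l]
      congr 1
      rw [List.drop_eq_getElem_cons hi1, hg1, List.drop_eq_getElem_cons hi2, hg2]
    rw [Finset.mem_coe, mem_dyckSet]
    constructor
    · rw [List.length_append, List.length_take, List.length_drop]
      omega
    · exact dyck_erase (hdec ▸ hd)
  · -- backward map lands in the filtered set
    intro v hv
    obtain ⟨hlen, hd⟩ := mem_dyckSet.mp hv
    have hilen : i ≤ v.length := by omega
    have ha : (v.take i).length = i := by rw [List.length_take]; omega
    rw [Finset.mem_coe, Finset.mem_filter]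
    refine ⟨mem_dyckSet.mpr ⟨?_, ?_⟩, ?_, ?_⟩
    · simp only [List.length_append, List.length_cons, List.length_drop, ha]
      omega
    · apply dyck_insert
      rw [List.take_append_drop]
      exact hd
    · rw [List.getD_append_right _ _ _ _ (le_of_eq ha), ha, Nat.sub_self]
      rfl
    · rw [List.getD_append_right _ _ _ _ (by omega), ha,
        show i + 1 - i = 1 by omega]
      rfl
  · -- left inverse
    intro l hl
    dsimp only
    obtain ⟨hmem, hpk⟩ := Finset.mem_filter.mp hl
    obtain ⟨hlen, hd⟩ := mem_dyckSet.mp hmem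
    have hi1 : i < l.length := by omega
    have hi2 : i + 1 < l.length := by omega
    have hg1 : l[i] = true := by rw [← List.getD_eq_getElem l false hi1]; exact hpk.1
    have hg2 : l[i+1] = false := by rw [← List.getD_eq_getElem l true hi2]; exact hpk.2
    have hdec : l = l.take i ++ true :: false :: l.drop (i+2) := by
      conv_lhs => rw [← List.take_append_drop i l]
      congr 1
      rw [List.drop_eq_getElem_cons hi1, hg1, List.drop_eq_getElem_cons hi2, hg2]
    have ha : (l.take i).length = i := by rw [List.length_take]; omega
    conv_lhs => rw [hdec]
    rw [show (l.take i ++ true :: false :: l.drop (i+2)).take i ++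
        (l.take i ++ true :: false :: l.drop (i+2)).drop (i+2) = l.take i ++ l.drop (i+2) from by
      rw [List.take_append_of_le_length (by omega), List.take_of_length_le (by omega),
        show l.take i ++ true :: false :: l.drop (i+2) =
          (l.take i ++ [true, false]) ++ l.drop (i+2) from by simp,
        drop_len_append _ (by simp [ha])]]
    rw [take_len_append _ ha, drop_len_append _ ha]
    exact hdec.symm
  · -- right inverse
    intro v hv
    dsimp only
    obtain ⟨hlen, hd⟩ := mem_dyckSet.mp hv
    have ha : (v.take i).length = i := by rw [List.length_take]; omega
    rw [take_len_append _ ha,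
      show List.take i v ++ true :: false :: List.drop i v =
        (List.take i v ++ [true, false]) ++ List.drop i v from by simp,
      drop_len_append _ (by simp [ha]), List.take_append_drop]

/-! ### Sum of peaks -/

lemma sum_peaks (n : ℕ) (hn : 1 ≤ n) :
    ∑ l ∈ dyckSet n, (l.zip l.tail).count (true, false) = (2*n-1) * catalan (n-1) := by
  classical
  have h1 : ∀ l ∈ dyckSet n, (l.zip l.tail).count (true, false) =
      ∑ i ∈ Finset.range (2*n-1),
        if l.getD i false = true ∧ l.getD (i+1) true = false then 1 else 0 := by
    intro l hl
    rw [peaks_eq_sum, (mem_dyckSet.mp hl).1]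
  rw [Finset.sum_congr rfl h1, Finset.sum_comm]
  have h2 : ∀ i ∈ Finset.range (2*n-1),
      (∑ l ∈ dyckSet n,
        if l.getD i false = true ∧ l.getD (i+1) true = false then 1 else 0) = catalan (n-1) := by
    intro i hi
    rw [← Finset.card_filter, card_filter_peak n i hn (Finset.mem_range.mp hi), card_dyckSet]
  rw [Finset.sum_congr rfl h2, Finset.sum_const, Finset.card_range, smul_eq_mul]

open scoped Classical in
/-- The total number of valleys across all Dyck paths of semilength `n` is
`binomial (2n-1) (n+1)`. -/
theorem total_valleys_eq (n : ℕ) (hn : 1 ≤ n) :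
    ∑ w ∈ Finset.univ.filter (fun w : Fin (2 * n) → Bool => IsDyckWord (List.ofFn w)),
      dyckValleys (List.ofFn w) = (2 * n - 1).choose (n + 1) := by
  classical
  have himg : ∑ l ∈ dyckSet n, dyckValleys l =
      ∑ w ∈ Finset.univ.filter (fun w : Fin (2 * n) → Bool => IsDyckWord (List.ofFn w)),
        dyckValleys (List.ofFn w) := by
    rw [dyckSet]
    exact Finset.sum_image (fun x _ y _ h => List.ofFn_inj.mp h)
  rw [← himg]
  have key : ∀ l ∈ dyckSet n, (l.zip l.tail).count (true, false) = dyckValleys l + 1 := by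
    intro l hl
    obtain ⟨hlen, hd⟩ := mem_dyckSet.mp hl
    refine ud_eq_du_succ hd ?_
    intro h
    rw [h] at hlen
    simp at hlen
    omega
  have hsum : ∑ l ∈ dyckSet n, (dyckValleys l + 1) = (2*n-1) * catalan (n-1) := by
    rw [← sum_peaks n hn]
    exact (Finset.sum_congr rfl key).symm
  rw [Finset.sum_add_distrib, Finset.sum_const, card_dyckSet, smul_eq_mul, mul_one] at hsum
  have ha := dyck_arith (n-1)
  rw [show 2*(n-1)+1 = 2*n-1 by omega, show (n-1)+2 = n+1 by omega,
    show (n-1)+1 = n by omega] at ha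
  omega
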